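/- If a group G has unique roots, then: (1) G is torsion-free, i.e. every element g ≠ 1 has infinite order; and (2) for every g ∈ G with g ≠ 1 and all integers i, j, if g^i is conjugate to g^j in G, then i = j. -/

import Mathlib

def IsRoot {G : Type*} [Group G] (r : G) : Prop :=
  ¬ ∃ (s : G) (k : ℕ), 2 ≤ k ∧ r = s ^ k

def HasUniqueRoots (G : Type*) [Group G] : Prop :=
  ∀ g : G, g ≠ 1 → ∃! r : G, IsRoot r ∧ ∃ k : ℕ, 1 ≤ k ∧ g = r ^ k

section aux
variable {G : Type*} [Group G]

lemma aux_tf (h : HasUniqueRoots G) : ∀ g : G, g ≠ 1 → ¬ IsOfFinOrder g := by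
  intro g hg hfin
  obtain ⟨r, ⟨hr, k, hk, hgr⟩, -⟩ := h g hg
  have hrfin : IsOfFinOrder r := by
    rw [isOfFinOrder_iff_pow_eq_one]
    obtain ⟨n, hn, hgn⟩ := isOfFinOrder_iff_pow_eq_one.mp hfin
    exact ⟨k * n, by positivity, by rw [pow_mul, ← hgr, hgn]⟩
  have hm : 0 < orderOf r := hrfin.orderOf_pos
  exact hr ⟨r, orderOf r + 1, by omega, by rw [pow_succ, pow_orderOf_eq_one, one_mul]⟩

lemma aux_root_unique (h : HasUniqueRoots G) {c r s : G} (hc : c ≠ 1)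
    (hr : IsRoot r) (hs : IsRoot s) {p q : ℕ} (hp : 1 ≤ p) (hq : 1 ≤ q)
    (h1 : c = r ^ p) (h2 : c = s ^ q) : r = s := by
  obtain ⟨u, -, hu⟩ := h c hc
  rw [hu r ⟨hr, p, hp, h1⟩, hu s ⟨hs, q, hq, h2⟩]

lemma aux_pow_one_ne (h : HasUniqueRoots G) {a : G} (ha : a ≠ 1) {n : ℕ} (hn : 0 < n) :
    a ^ n ≠ 1 := fun hyp =>
  aux_tf h a ha (isOfFinOrder_iff_pow_eq_one.mpr ⟨n, hn, hyp⟩)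

lemma aux_sq_inj (h : HasUniqueRoots G) {a b : G} (hab : a ^ 2 = b ^ 2) : a = b := by
  by_cases ha : a = 1
  · subst ha
    by_contra hb
    exact aux_pow_one_ne h (Ne.symm hb) (by omega : 0 < 2) (hab.symm.trans (one_pow 2))
  · have hb : b ≠ 1 := by
      rintro rfl; exact aux_pow_one_ne h ha (by omega : 0 < 2) (hab.trans (one_pow 2))
    have hc : a ^ 2 ≠ 1 := aux_pow_one_ne h ha (by omega)
    obtain ⟨r, ⟨hr, p, hp, har⟩, -⟩ := h a ha
    obtain ⟨s, ⟨hs, q, hq, hbs⟩, -⟩ := h b hb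
    have h1 : a ^ 2 = r ^ (p * 2) := by rw [pow_mul, ← har]
    have h2 : a ^ 2 = s ^ (q * 2) := by rw [pow_mul, ← hbs, hab]
    have hrs : r = s := aux_root_unique h hc hr hs (by omega) (by omega) h1 h2
    subst hrs
    have hrne : r ≠ 1 := by rintro rfl; exact ha (har.trans (one_pow p))
    have hinj : Function.Injective (fun n : ℕ => r ^ n) :=
      injective_pow_iff_not_isOfFinOrder.mpr (aux_tf h r hrne)
    have hpq : p * 2 = q * 2 := hinj (h1.symm.trans h2)
    have : p = q := by omega
    rw [har, hbs, this]

/-- No nontrivial element is conjugate to its inverse. -/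
lemma aux_not_conj_inv (h : HasUniqueRoots G) {r x : G} (hr : r ≠ 1)
    (hx : x * r * x⁻¹ = r⁻¹) : False := by
  have h2 : r * x = x * r⁻¹ := by
    have := congrArg (fun t => x⁻¹ * t⁻¹ * x) hx
    simp only [mul_inv_rev, inv_inv] at this
    group at this ⊢
    rw [this]; group
  have hsq : (x * r) ^ 2 = x ^ 2 := by
    rw [pow_two, pow_two]
    calc x * r * (x * r) = x * (r * x) * r := by group
    _ = x * (x * r⁻¹) * r := by rw [h2]
    _ = x * x := by group
  exact hr (mul_eq_left.mp (aux_sq_inj h hsq))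

lemma aux_conj_root' {r x : G} (hr : IsRoot r) : IsRoot (x * r * x⁻¹) := by
  rintro ⟨s, k, hk, hs⟩
  refine hr ⟨x⁻¹ * s * x, k, hk, ?_⟩
  have h1 : r = x⁻¹ * s ^ k * x := by rw [← hs]; group
  have h2 : (x⁻¹ * s * x⁻¹⁻¹) ^ k = x⁻¹ * s ^ k * x⁻¹⁻¹ := conj_pow
  rw [inv_inv] at h2
  rw [h1, ← h2]

lemma aux_inv_root {r : G} (hr : IsRoot r) : IsRoot r⁻¹ := by
  rintro ⟨s, k, hk, hs⟩
  exact hr ⟨s⁻¹, k, hk, by rw [inv_pow, ← hs, inv_inv]⟩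

lemma aux_rep {c s : G} (hs : IsRoot s) {m : ℤ} (hm : m ≠ 0)
    (heq : c = s ^ m) :
    ∃ (t : G) (n : ℕ), IsRoot t ∧ 1 ≤ n ∧ c = t ^ n ∧ (t = s ∨ t = s⁻¹) := by
  rcases lt_or_gt_of_ne hm with hneg | hpos
  · refine ⟨s⁻¹, (-m).toNat, aux_inv_root hs, by omega, ?_, Or.inr rfl⟩
    have hn : (((-m).toNat : ℤ)) = -m := by omega
    rw [heq, ← zpow_natCast s⁻¹, hn, inv_zpow, ← zpow_neg, neg_neg]
  · refine ⟨s, m.toNat, hs, by omega, ?_, Or.inl rfl⟩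
    have hn : ((m.toNat : ℤ)) = m := by omega
    rw [heq, ← zpow_natCast s, hn]

end aux

theorem stmt_11 {G : Type*} [Group G] (h : HasUniqueRoots G) :
    (∀ g : G, g ≠ 1 → ¬ IsOfFinOrder g) ∧
    (∀ g : G, g ≠ 1 → ∀ i j : ℤ, IsConj (g ^ i) (g ^ j) → i = j) := by
  refine ⟨aux_tf h, ?_⟩
  intro g hg i j hconj
  have hginf : ¬ IsOfFinOrder g := aux_tf h g hg
  have hzinj : Function.Injective (fun n : ℤ => g ^ n) :=
    injective_zpow_iff_not_isOfFinOrder.mpr hginf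
  obtain ⟨x, hx'⟩ := isConj_iff.mp hconj
  by_cases hi : i = 0
  · subst hi
    have : g ^ j = g ^ (0:ℤ) := by rw [← hx']; group
    exact (hzinj this).symm
  by_cases hj : j = 0
  · subst hj
    have : g ^ i = g ^ (0:ℤ) := by
      have h1 : g ^ i = x⁻¹ * (x * g ^ i * x⁻¹) * x := by group
      rw [h1, hx']; group
    exact hzinj this
  -- main case
  obtain ⟨r, ⟨hr, k, hk, hgr⟩, -⟩ := h g hg
  have hrne : r ≠ 1 := by rintro rfl; exact hg (hgr.trans (one_pow k))
  have hrzinj : Function.Injective (fun n : ℤ => r ^ n) :=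
    injective_zpow_iff_not_isOfFinOrder.mpr (aux_tf h r hrne)
  have hkz : (k : ℤ) ≠ 0 := by exact_mod_cast (by omega : k ≠ 0)
  have hgi : g ^ i = r ^ ((k : ℤ) * i) := by rw [zpow_mul, zpow_natCast, ← hgr]
  have hgj : g ^ j = r ^ ((k : ℤ) * j) := by rw [zpow_mul, zpow_natCast, ← hgr]
  set r' : G := x * r * x⁻¹ with hr'def
  have hr' : IsRoot r' := aux_conj_root' hr
  have hgj' : g ^ j = r' ^ ((k : ℤ) * i) := by
    rw [← hx', hgi, hr'def, conj_zpow]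
  have hgjne : g ^ j ≠ 1 := fun hyp => hj (hzinj (hyp.trans (zpow_zero g).symm))
  obtain ⟨t1, n1, ht1, hn1, he1, hd1⟩ := aux_rep hr (mul_ne_zero hkz hj) hgj
  obtain ⟨t2, n2, ht2, hn2, he2, hd2⟩ := aux_rep hr' (mul_ne_zero hkz hi) hgj'
  have ht : t1 = t2 := aux_root_unique h hgjne ht1 ht2 hn1 hn2 he1 he2
  have hrr' : r = r' := by
    rcases hd1 with h1 | h1 <;> rcases hd2 with h2 | h2 <;> rw [h1, h2] at ht
    · exact ht
    · exfalso
      have ht2 := ht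
      rw [hr'def] at ht2
      have : x * r⁻¹ * x⁻¹ = r⁻¹⁻¹ := by
        calc x * r⁻¹ * x⁻¹ = (x * r * x⁻¹)⁻¹ := by group
        _ = r⁻¹⁻¹ := by rw [inv_inv, ← ht2]
      exact aux_not_conj_inv h (inv_ne_one.mpr hrne) this
    · exfalso
      have : x * r * x⁻¹ = r⁻¹ := by rw [hr'def] at ht; rw [ht]
      exact aux_not_conj_inv h hrne this
    · exact inv_injective ht
  have : r ^ ((k:ℤ) * j) = r ^ ((k:ℤ) * i) := by rw [← hgj, hgj', hrr']
  have hkij : (k:ℤ) * j = (k:ℤ) * i := hrzinj this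
  exact (mul_left_cancel₀ hkz hkij).symm
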